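/- Let B be a unital C*-algebra, X ⊆ B a complex linear subspace, and v ∈ X with ‖v‖ ≤ 1. Suppose that for every x ∈ X with ‖x‖ ≤ 1 the 2×2 matrix !![v, x; 0, v] over B has norm at least √(1 + ‖x‖). Then ‖(star v) * x‖ = ‖x‖ and ‖x * (star v)‖ = ‖x‖ for every x ∈ X. -/

import Mathlib

namespace CStarVecAux
open Matrix

variable {B : Type*} [NonUnitalCStarAlgebra B] [PartialOrder B] [StarOrderedRing B]

/-- The `B`-valued inner product on `Fin n → B`. -/
def ip {n : ℕ} (x y : Fin n → B) : B := ∑ i, star (x i) * y i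

lemma ip_self_nonneg {n : ℕ} (x : Fin n → B) : 0 ≤ ip x x :=
  Finset.sum_nonneg fun _ _ => star_mul_self_nonneg _

lemma entry_le_ip {n : ℕ} (x : Fin n → B) (i : Fin n) : star (x i) * x i ≤ ip x x :=
  Finset.single_le_sum (fun j _ => star_mul_self_nonneg (x j)) (Finset.mem_univ i)

lemma norm_entry_sq_le {n : ℕ} (x : Fin n → B) (i : Fin n) :
    ‖x i‖ * ‖x i‖ ≤ ‖ip x x‖ := by
  rw [← CStarRing.norm_star_mul_self]
  exact CStarAlgebra.norm_le_norm_of_nonneg_of_le (star_mul_self_nonneg _) (entry_le_ip x i)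

lemma star_ip {n : ℕ} (x y : Fin n → B) : star (ip x y) = ip y x := by
  simp [ip, star_sum, StarMul.star_mul]

lemma ip_sub_expand {n : ℕ} (x y : Fin n → B) (b : B) :
    ip (fun i => x i * b - y i) (fun i => x i * b - y i)
      = star b * ip x x * b - star b * ip x y - ip y x * b + ip y y := by
  simp only [ip, star_sub, StarMul.star_mul, Finset.sum_mul, Finset.mul_sum,
    ← Finset.sum_sub_distrib, ← Finset.sum_add_distrib]
  refine Finset.sum_congr rfl fun i _ => ?_
  noncomm_ring

/-- Cauchy–Schwarz for the `B`-valued inner product. -/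
lemma cs_sq {n : ℕ} (x y : Fin n → B) :
    ‖ip x y‖ ^ 2 ≤ ‖ip x x‖ * ‖ip y y‖ := by
  set u := ip x y with hu
  set P := ip x x with hP
  set Q := ip y y with hQ
  have hPn : 0 ≤ P := ip_self_nonneg x
  have hg : (0 : B) ≤ star u * u := star_mul_self_nonneg u
  have key : ∀ t : ℝ, 0 ≤ t →
      2 * t * ‖star u * u‖ ≤ t ^ 2 * ‖P‖ * ‖star u * u‖ + ‖Q‖ := by
    intro t ht
    have h0 := ip_self_nonneg (fun i => x i * (t • u) - y i) (B := B)
    rw [ip_sub_expand] at h0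
    rw [← star_ip x y, ← hu] at h0
    -- rewrite scalar multiples
    have hexp : star (t • u) * P * (t • u) - star (t • u) * u - star u * (t • u) + Q
        = (t ^ 2 • (star u * P * u) + Q) - (2 * t) • (star u * u) := by
      rw [star_smul, star_trivial]
      simp only [smul_mul_assoc, mul_smul_comm, smul_smul]
      rw [two_mul, add_smul, pow_two]
      abel
    rw [hexp, sub_nonneg] at h0
    have hconj : star u * P * u ≤ ‖P‖ • (star u * u) :=
      CStarAlgebra.star_left_conjugate_le_norm_smul hPn.isSelfAdjoint
    have h1 : (2 * t) • (star u * u) ≤ (t ^ 2 * ‖P‖) • (star u * u) + Q := by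
      refine h0.trans (add_le_add_left ?_ Q)
      rw [← smul_smul]
      exact smul_le_smul_of_nonneg_left hconj (sq_nonneg t)
    have h2 : ‖(2 * t) • (star u * u)‖ ≤ ‖(t ^ 2 * ‖P‖) • (star u * u) + Q‖ :=
      CStarAlgebra.norm_le_norm_of_nonneg_of_le
        (smul_nonneg (by positivity) hg) h1
    calc 2 * t * ‖star u * u‖ = ‖(2 * t) • (star u * u)‖ := by
          rw [norm_smul, Real.norm_eq_abs, abs_of_nonneg (by positivity)]
      _ ≤ ‖(t ^ 2 * ‖P‖) • (star u * u)‖ + ‖Q‖ := h2.trans (norm_add_le _ _)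
      _ = t ^ 2 * ‖P‖ * ‖star u * u‖ + ‖Q‖ := by
          rw [norm_smul, Real.norm_eq_abs, abs_of_nonneg (by positivity)]
  have hnu : ‖u‖ ^ 2 = ‖star u * u‖ := by
    rw [CStarRing.norm_star_mul_self, pow_two]
  rcases eq_or_lt_of_le (norm_nonneg P) with hP0 | hP0
  · -- ‖P‖ = 0 : show ‖star u * u‖ = 0
    have : ∀ t : ℝ, 0 ≤ t → 2 * t * ‖star u * u‖ ≤ ‖Q‖ := by
      intro t ht
      simpa [← hP0] using key t ht
    have hg0 : ‖star u * u‖ ≤ 0 := by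
      by_contra hgt
      push_neg at hgt
      have h5 := this ((‖Q‖ + 1) / (2 * ‖star u * u‖)) (by positivity)
      have h6 : 2 * ((‖Q‖ + 1) / (2 * ‖star u * u‖)) * ‖star u * u‖ = ‖Q‖ + 1 := by
        field_simp
      rw [h6] at h5
      linarith
    have hz : ‖star u * u‖ = 0 := le_antisymm hg0 (norm_nonneg _)
    rw [hz] at hnu
    rw [hnu]
    positivity
  · have := key (1 / ‖P‖) (by positivity)
    rw [hnu]
    have h3 : (1 / ‖P‖) ^ 2 * ‖P‖ = 1 / ‖P‖ := by field_simp
    rw [h3] at this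
    have hQn : 0 ≤ ‖Q‖ := norm_nonneg _
    have h4 : (1 / ‖P‖) * ‖star u * u‖ ≤ ‖Q‖ := by linarith
    calc ‖star u * u‖ = ‖P‖ * ((1 / ‖P‖) * ‖star u * u‖) := by field_simp
      _ ≤ ‖P‖ * ‖Q‖ := mul_le_mul_of_nonneg_left h4 hP0.le

lemma cs {n : ℕ} (x y : Fin n → B) :
    ‖ip x y‖ ≤ Real.sqrt ‖ip x x‖ * Real.sqrt ‖ip y y‖ := by
  have := cs_sq x y
  have h := Real.sqrt_le_sqrt this
  rwa [Real.sqrt_sq (norm_nonneg _), Real.sqrt_mul (norm_nonneg _)] at h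

lemma norm_entry_le_one {n : ℕ} {w : Fin n → B} (hw : ‖ip w w‖ ≤ 1) (i : Fin n) :
    ‖w i‖ ≤ 1 := by
  nlinarith [norm_entry_sq_le w i, norm_nonneg (w i)]

noncomputable def cnorm {m n : ℕ} (M : Matrix (Fin m) (Fin n) B) : ℝ :=
  sSup {r : ℝ | ∃ w : Fin n → B, ‖ip w w‖ ≤ 1 ∧
    r = Real.sqrt ‖ip (M.mulVec w) (M.mulVec w)‖}

lemma zero_mem_S {m n : ℕ} (M : Matrix (Fin m) (Fin n) B) :
    (0 : ℝ) ∈ {r : ℝ | ∃ w : Fin n → B, ‖ip w w‖ ≤ 1 ∧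
      r = Real.sqrt ‖ip (M.mulVec w) (M.mulVec w)‖} := by
  refine ⟨0, by simp [ip], ?_⟩
  simp [ip, Matrix.mulVec_zero]

lemma bddAbove_S {m n : ℕ} (M : Matrix (Fin m) (Fin n) B) :
    BddAbove {r : ℝ | ∃ w : Fin n → B, ‖ip w w‖ ≤ 1 ∧
      r = Real.sqrt ‖ip (M.mulVec w) (M.mulVec w)‖} := by
  refine ⟨Real.sqrt (∑ j : Fin m, (∑ i : Fin n, ‖M j i‖) ^ 2), ?_⟩
  rintro r ⟨w, hw, rfl⟩
  apply Real.sqrt_le_sqrt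
  calc ‖ip (M.mulVec w) (M.mulVec w)‖
      ≤ ∑ j : Fin m, ‖star (M.mulVec w j) * M.mulVec w j‖ := norm_sum_le _ _
    _ ≤ ∑ j : Fin m, (∑ i : Fin n, ‖M j i‖) ^ 2 := by
        refine Finset.sum_le_sum fun j _ => ?_
        rw [CStarRing.norm_star_mul_self, ← pow_two]
        have h1 : ‖M.mulVec w j‖ ≤ ∑ i : Fin n, ‖M j i‖ := by
          have hrfl : M.mulVec w j = ∑ i : Fin n, M j i * w i := rfl
          rw [hrfl]
          calc ‖∑ i : Fin n, M j i * w i‖ ≤ ∑ i : Fin n, ‖M j i * w i‖ := norm_sum_le _ _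
            _ ≤ ∑ i : Fin n, ‖M j i‖ := by
                refine Finset.sum_le_sum fun i _ => ?_
                calc ‖M j i * w i‖ ≤ ‖M j i‖ * ‖w i‖ := norm_mul_le _ _
                  _ ≤ ‖M j i‖ * 1 := by
                      exact mul_le_mul_of_nonneg_left (norm_entry_le_one hw i)
                        (norm_nonneg _)
                  _ = ‖M j i‖ := mul_one _
        exact pow_le_pow_left₀ (norm_nonneg _) h1 2
    _ ≤ ∑ j : Fin m, (∑ i : Fin n, ‖M j i‖) ^ 2 := le_refl _

lemma cnorm_nonneg {m n : ℕ} (M : Matrix (Fin m) (Fin n) B) : 0 ≤ cnorm M :=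
  le_csSup (bddAbove_S M) (zero_mem_S M)

lemma sqrt_mem_le_cnorm {m n : ℕ} (M : Matrix (Fin m) (Fin n) B) {w : Fin n → B}
    (hw : ‖ip w w‖ ≤ 1) :
    Real.sqrt ‖ip (M.mulVec w) (M.mulVec w)‖ ≤ cnorm M :=
  le_csSup (bddAbove_S M) ⟨w, hw, rfl⟩

lemma ip_smul {n : ℕ} (c : ℝ) (x : Fin n → B) :
    ip (c • x) (c • x) = (c * c) • ip x x := by
  simp only [ip, Pi.smul_apply, star_smul, star_trivial, smul_mul_smul_comm,
    Finset.smul_sum]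

lemma nn_mulVec_le {m n : ℕ} (M : Matrix (Fin m) (Fin n) B) (z : Fin n → B) :
    Real.sqrt ‖ip (M.mulVec z) (M.mulVec z)‖ ≤ cnorm M * Real.sqrt ‖ip z z‖ := by
  rcases eq_or_lt_of_le (Real.sqrt_nonneg ‖ip z z‖) with hc | hc
  · -- ip z z has norm 0, so z = 0
    have hz0 : ‖ip z z‖ = 0 := by
      have := Real.sqrt_eq_zero (norm_nonneg _) |>.mp hc.symm
      exact this
    have hz : z = 0 := by
      funext i
      have := norm_entry_sq_le z i
      rw [hz0] at this
      have : ‖z i‖ = 0 := by nlinarith [norm_nonneg (z i)]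
      simpa using this
    subst hz
    simp [ip, Matrix.mulVec_zero, mul_nonneg (cnorm_nonneg M) (Real.sqrt_nonneg _)]
  · set c : ℝ := Real.sqrt ‖ip z z‖ with hcdef
    have hcc : c * c = ‖ip z z‖ := Real.mul_self_sqrt (norm_nonneg _)
    have hmv : M.mulVec (c⁻¹ • z) = c⁻¹ • M.mulVec z := by
      funext j
      simp [Matrix.mulVec, dotProduct, mul_smul_comm, Finset.smul_sum]
    have h1 : ‖ip (c⁻¹ • z) (c⁻¹ • z)‖ ≤ 1 := by
      rw [ip_smul, norm_smul, Real.norm_eq_abs, abs_of_nonneg (by positivity), ← hcc]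
      rw [show c⁻¹ * c⁻¹ * (c * c) = (c⁻¹ * c) * (c⁻¹ * c) by ring, inv_mul_cancel₀ hc.ne']
      simp
    have h2 := sqrt_mem_le_cnorm M h1
    rw [hmv, ip_smul, norm_smul, Real.norm_eq_abs, abs_of_nonneg (by positivity)] at h2
    rw [Real.sqrt_mul (by positivity), Real.sqrt_mul_self (by positivity)] at h2
    calc Real.sqrt ‖ip (M.mulVec z) (M.mulVec z)‖
        = c * (c⁻¹ * Real.sqrt ‖ip (M.mulVec z) (M.mulVec z)‖) := by
          rw [← mul_assoc, mul_inv_cancel₀ hc.ne', one_mul]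
      _ ≤ c * cnorm M := mul_le_mul_of_nonneg_left h2 hc.le
      _ = cnorm M * c := mul_comm _ _

lemma ip_conjTranspose_mulVec {m n : ℕ} (M : Matrix (Fin m) (Fin n) B)
    (z : Fin m → B) (w : Fin n → B) :
    ip ((Mᴴ).mulVec z) w = ip z (M.mulVec w) := by
  simp only [ip, Matrix.mulVec, dotProduct, Matrix.conjTranspose_apply,
    star_sum, Finset.sum_mul, Finset.mul_sum]
  rw [Finset.sum_comm]
  exact Finset.sum_congr rfl fun j _ => Finset.sum_congr rfl fun i _ => by
    rw [StarMul.star_mul, star_star, mul_assoc]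

lemma cnorm_le_conjTranspose {m n : ℕ} (M : Matrix (Fin m) (Fin n) B) :
    cnorm M ≤ cnorm Mᴴ := by
  apply Real.sSup_le _ (cnorm_nonneg Mᴴ)
  rintro r ⟨w, hw, rfl⟩
  set z := M.mulVec w with hz
  set a : ℝ := Real.sqrt ‖ip z z‖ with ha
  have ha2 : a * a = ‖ip z z‖ := Real.mul_self_sqrt (norm_nonneg _)
  have hkey : ‖ip z z‖ ≤ (cnorm Mᴴ * a) * 1 := by
    calc ‖ip z z‖ = ‖ip ((Mᴴ).mulVec z) w‖ := by rw [ip_conjTranspose_mulVec]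
      _ ≤ Real.sqrt ‖ip ((Mᴴ).mulVec z) ((Mᴴ).mulVec z)‖ * Real.sqrt ‖ip w w‖ := cs _ _
      _ ≤ (cnorm Mᴴ * a) * 1 := by
          refine mul_le_mul (nn_mulVec_le Mᴴ z) ?_ (Real.sqrt_nonneg _) ?_
          · exact Real.sqrt_le_one.mpr (by simpa using hw)
          · exact mul_nonneg (cnorm_nonneg _) (Real.sqrt_nonneg _)
  rw [mul_one, ← ha2] at hkey
  nlinarith [Real.sqrt_nonneg ‖ip z z‖, cnorm_nonneg Mᴴ]

lemma cross_le (a w0 w1 : B) :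
    star w0 * (a * w1) + star w1 * (star a * w0) ≤ ‖a‖ • (star w0 * w0 + star w1 * w1) := by
  rcases eq_or_ne a 0 with rfl | ha
  · simp [smul_add]
  · set c := ‖a‖ with hc
    have hc0 : 0 < c := norm_pos_iff.mpr ha
    set s := Real.sqrt c with hs
    have hs0 : 0 < s := Real.sqrt_pos.mpr hc0
    have hss : s * s = c := Real.mul_self_sqrt hc0.le
    have h0 : (0:B) ≤ star (s • w0 - s⁻¹ • (a * w1)) * (s • w0 - s⁻¹ • (a * w1)) :=
      star_mul_self_nonneg _
    have h1 : star (s • w0 - s⁻¹ • (a * w1)) = s • star w0 - s⁻¹ • (star w1 * star a) := by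
      simp [star_smul, StarMul.star_mul]
    have hexp : star (s • w0 - s⁻¹ • (a * w1)) * (s • w0 - s⁻¹ • (a * w1))
        = (c • (star w0 * w0) + c⁻¹ • (star w1 * ((star a * a) * w1)))
          - (star w0 * (a * w1) + star w1 * (star a * w0)) := by
      rw [h1, sub_mul, mul_sub, mul_sub, smul_mul_smul_comm, smul_mul_smul_comm,
        smul_mul_smul_comm, smul_mul_smul_comm, hss, mul_inv_cancel₀ hs0.ne',
        inv_mul_cancel₀ hs0.ne', show s⁻¹ * s⁻¹ = c⁻¹ by rw [← mul_inv, hss],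
        one_smul, one_smul]
      simp only [mul_assoc]
      abel
    rw [hexp, sub_nonneg] at h0
    refine h0.trans ?_
    have hconj : star w1 * (star a * a) * w1 ≤ ‖star a * a‖ • (star w1 * w1) :=
      CStarAlgebra.star_left_conjugate_le_norm_smul (IsSelfAdjoint.star_mul_self a)
    rw [CStarRing.norm_star_mul_self, ← hc] at hconj
    have h2 : c⁻¹ • (star w1 * ((star a * a) * w1)) ≤ c • (star w1 * w1) := by
      have := smul_le_smul_of_nonneg_left hconj (inv_nonneg.mpr hc0.le)
      rw [smul_smul, show c⁻¹ * (c * c) = c by field_simp] at this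
      simpa [mul_assoc] using this
    rw [smul_add]
    exact add_le_add le_rfl h2

lemma conj_le_of_norm_le {p : B} (hp : ‖p‖ ≤ 1) (w : B) :
    star w * (star p * p) * w ≤ star w * w := by
  have hconj : star w * (star p * p) * w ≤ ‖star p * p‖ • (star w * w) :=
    CStarAlgebra.star_left_conjugate_le_norm_smul (IsSelfAdjoint.star_mul_self p)
  refine hconj.trans ?_
  calc ‖star p * p‖ • (star w * w) ≤ (1:ℝ) • (star w * w) := by
        refine smul_le_smul_of_nonneg_right ?_ (star_mul_self_nonneg w)
        rw [CStarRing.norm_star_mul_self]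
        nlinarith [norm_nonneg p]
    _ = star w * w := one_smul _ _

lemma cnorm_le_of_bound {m n : ℕ} (M : Matrix (Fin m) (Fin n) B) {c : ℝ} (hc : 0 ≤ c)
    (h : ∀ w : Fin n → B, ‖ip w w‖ ≤ 1 → ‖ip (M.mulVec w) (M.mulVec w)‖ ≤ c) :
    cnorm M ≤ Real.sqrt c := by
  apply Real.sSup_le _ (Real.sqrt_nonneg c)
  rintro r ⟨w, hw, rfl⟩
  exact Real.sqrt_le_sqrt (h w hw)

/-- Estimate for the upper triangular matrix `!![p, q; 0, p]`. -/
lemma est_upper {p : B} (hp : ‖p‖ ≤ 1) (q : B) (w : Fin 2 → B) (hw : ‖ip w w‖ ≤ 1) :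
    ‖ip ((!![p, q; 0, p]).mulVec w) ((!![p, q; 0, p]).mulVec w)‖
      ≤ 1 + ‖q‖ ^ 2 + ‖star p * q‖ := by
  have hmv : (!![p, q; 0, p]).mulVec w = ![p * w 0 + q * w 1, p * w 1] := by
    funext j
    fin_cases j <;>
      simp [Matrix.mulVec, dotProduct, Fin.sum_univ_two]
  have hipw : ip w w = star (w 0) * w 0 + star (w 1) * w 1 := by
    simp [ip, Fin.sum_univ_two]
  have hS : ip ((!![p, q; 0, p]).mulVec w) ((!![p, q; 0, p]).mulVec w)
      = (star (w 0) * (star p * p) * w 0 + star (w 1) * (star p * p) * w 1)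
        + star (w 1) * (star q * q) * w 1
        + (star (w 0) * ((star p * q) * w 1) + star (w 1) * (star (star p * q) * w 0)) := by
    rw [hmv]
    simp only [ip, Fin.sum_univ_two, Matrix.cons_val_zero, Matrix.cons_val_one,
      Matrix.head_cons, star_add, StarMul.star_mul, star_star, add_mul, mul_add]
    noncomm_ring
  have hK : (0:ℝ) ≤ 1 + ‖q‖ ^ 2 + ‖star p * q‖ := by positivity
  have hle : ip ((!![p, q; 0, p]).mulVec w) ((!![p, q; 0, p]).mulVec w)
      ≤ (1 + ‖q‖ ^ 2 + ‖star p * q‖) • ip w w := by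
    rw [hS, hipw]
    have e1 : star (w 0) * (star p * p) * w 0 + star (w 1) * (star p * p) * w 1
        ≤ (1:ℝ) • (star (w 0) * w 0 + star (w 1) * w 1) := by
      rw [one_smul]
      exact add_le_add (conj_le_of_norm_le hp (w 0)) (conj_le_of_norm_le hp (w 1))
    have e2 : star (w 1) * (star q * q) * w 1
        ≤ (‖q‖ ^ 2 : ℝ) • (star (w 0) * w 0 + star (w 1) * w 1) := by
      have h2 : star (w 1) * (star q * q) * w 1 ≤ ‖star q * q‖ • (star (w 1) * w 1) :=
        CStarAlgebra.star_left_conjugate_le_norm_smul (IsSelfAdjoint.star_mul_self q)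
      refine h2.trans ?_
      rw [CStarRing.norm_star_mul_self, ← pow_two]
      exact smul_le_smul_of_nonneg_left
        (le_add_of_nonneg_left (star_mul_self_nonneg _)) (by positivity)
    have e3 : star (w 0) * ((star p * q) * w 1) + star (w 1) * (star (star p * q) * w 0)
        ≤ ‖star p * q‖ • (star (w 0) * w 0 + star (w 1) * w 1) :=
      cross_le (star p * q) (w 0) (w 1)
    calc star (w 0) * (star p * p) * w 0 + star (w 1) * (star p * p) * w 1
          + star (w 1) * (star q * q) * w 1
          + (star (w 0) * ((star p * q) * w 1) + star (w 1) * (star (star p * q) * w 0))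
        ≤ (1:ℝ) • (star (w 0) * w 0 + star (w 1) * w 1)
          + (‖q‖ ^ 2 : ℝ) • (star (w 0) * w 0 + star (w 1) * w 1)
          + ‖star p * q‖ • (star (w 0) * w 0 + star (w 1) * w 1) :=
          add_le_add (add_le_add e1 e2) e3
      _ = (1 + ‖q‖ ^ 2 + ‖star p * q‖) • (star (w 0) * w 0 + star (w 1) * w 1) := by
          rw [← add_smul, ← add_smul]
  calc ‖ip ((!![p, q; 0, p]).mulVec w) ((!![p, q; 0, p]).mulVec w)‖
      ≤ ‖(1 + ‖q‖ ^ 2 + ‖star p * q‖) • ip w w‖ :=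
        CStarAlgebra.norm_le_norm_of_nonneg_of_le (ip_self_nonneg _) hle
    _ = (1 + ‖q‖ ^ 2 + ‖star p * q‖) * ‖ip w w‖ := by
        rw [norm_smul, Real.norm_eq_abs, abs_of_nonneg hK]
    _ ≤ (1 + ‖q‖ ^ 2 + ‖star p * q‖) * 1 := mul_le_mul_of_nonneg_left hw hK
    _ = 1 + ‖q‖ ^ 2 + ‖star p * q‖ := mul_one _

/-- Estimate for the lower triangular matrix `!![p, 0; q, p]`. -/
lemma est_lower {p : B} (hp : ‖p‖ ≤ 1) (q : B) (w : Fin 2 → B) (hw : ‖ip w w‖ ≤ 1) :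
    ‖ip ((!![p, 0; q, p]).mulVec w) ((!![p, 0; q, p]).mulVec w)‖
      ≤ 1 + ‖q‖ ^ 2 + ‖star q * p‖ := by
  have hmv : (!![p, 0; q, p]).mulVec w = ![p * w 0, q * w 0 + p * w 1] := by
    funext j
    fin_cases j <;>
      simp [Matrix.mulVec, dotProduct, Fin.sum_univ_two]
  have hipw : ip w w = star (w 0) * w 0 + star (w 1) * w 1 := by
    simp [ip, Fin.sum_univ_two]
  have hS : ip ((!![p, 0; q, p]).mulVec w) ((!![p, 0; q, p]).mulVec w)
      = (star (w 0) * (star p * p) * w 0 + star (w 1) * (star p * p) * w 1)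
        + star (w 0) * (star q * q) * w 0
        + (star (w 0) * ((star q * p) * w 1) + star (w 1) * (star (star q * p) * w 0)) := by
    rw [hmv]
    simp only [ip, Fin.sum_univ_two, Matrix.cons_val_zero, Matrix.cons_val_one,
      Matrix.head_cons, star_add, StarMul.star_mul, star_star, add_mul, mul_add]
    noncomm_ring
  have hK : (0:ℝ) ≤ 1 + ‖q‖ ^ 2 + ‖star q * p‖ := by positivity
  have hle : ip ((!![p, 0; q, p]).mulVec w) ((!![p, 0; q, p]).mulVec w)
      ≤ (1 + ‖q‖ ^ 2 + ‖star q * p‖) • ip w w := by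
    rw [hS, hipw]
    have e1 : star (w 0) * (star p * p) * w 0 + star (w 1) * (star p * p) * w 1
        ≤ (1:ℝ) • (star (w 0) * w 0 + star (w 1) * w 1) := by
      rw [one_smul]
      exact add_le_add (conj_le_of_norm_le hp (w 0)) (conj_le_of_norm_le hp (w 1))
    have e2 : star (w 0) * (star q * q) * w 0
        ≤ (‖q‖ ^ 2 : ℝ) • (star (w 0) * w 0 + star (w 1) * w 1) := by
      have h2 : star (w 0) * (star q * q) * w 0 ≤ ‖star q * q‖ • (star (w 0) * w 0) :=
        CStarAlgebra.star_left_conjugate_le_norm_smul (IsSelfAdjoint.star_mul_self q)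
      refine h2.trans ?_
      rw [CStarRing.norm_star_mul_self, ← pow_two]
      exact smul_le_smul_of_nonneg_left
        (le_add_of_nonneg_right (star_mul_self_nonneg _)) (by positivity)
    have e3 : star (w 0) * ((star q * p) * w 1) + star (w 1) * (star (star q * p) * w 0)
        ≤ ‖star q * p‖ • (star (w 0) * w 0 + star (w 1) * w 1) :=
      cross_le (star q * p) (w 0) (w 1)
    calc star (w 0) * (star p * p) * w 0 + star (w 1) * (star p * p) * w 1
          + star (w 0) * (star q * q) * w 0
          + (star (w 0) * ((star q * p) * w 1) + star (w 1) * (star (star q * p) * w 0))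
        ≤ (1:ℝ) • (star (w 0) * w 0 + star (w 1) * w 1)
          + (‖q‖ ^ 2 : ℝ) • (star (w 0) * w 0 + star (w 1) * w 1)
          + ‖star q * p‖ • (star (w 0) * w 0 + star (w 1) * w 1) :=
          add_le_add (add_le_add e1 e2) e3
      _ = (1 + ‖q‖ ^ 2 + ‖star q * p‖) • (star (w 0) * w 0 + star (w 1) * w 1) := by
          rw [← add_smul, ← add_smul]
  calc ‖ip ((!![p, 0; q, p]).mulVec w) ((!![p, 0; q, p]).mulVec w)‖
      ≤ ‖(1 + ‖q‖ ^ 2 + ‖star q * p‖) • ip w w‖ :=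
        CStarAlgebra.norm_le_norm_of_nonneg_of_le (ip_self_nonneg _) hle
    _ = (1 + ‖q‖ ^ 2 + ‖star q * p‖) * ‖ip w w‖ := by
        rw [norm_smul, Real.norm_eq_abs, abs_of_nonneg hK]
    _ ≤ (1 + ‖q‖ ^ 2 + ‖star q * p‖) * 1 := mul_le_mul_of_nonneg_left hw hK
    _ = 1 + ‖q‖ ^ 2 + ‖star q * p‖ := mul_one _

end CStarVecAux


/-- The canonical C*-matrix norm on matrices over a C*-algebra `A`, obtained by viewing an
`m × n` matrix as an operator between the Hilbert C*-modules `A^n` and `A^m` (as in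
Mathlib's `CStarMatrix`).  For square matrices this is the unique C*-algebra norm. -/
noncomputable def cstarMatrixNorm {A : Type*} [NonUnitalNormedRing A] [StarRing A]
    {m n : ℕ} (M : Matrix (Fin m) (Fin n) A) : ℝ :=
  sSup {r : ℝ | ∃ v : Fin n → A, ‖∑ i, star (v i) * v i‖ ≤ 1 ∧
    r = Real.sqrt ‖∑ j, star (M.mulVec v j) * M.mulVec v j‖}

open CStarVecAux Matrix

/-- Part of the proof of Theorem 3.1: if `v` is a contraction in a subspace `X` of a unital
C*-algebra and `‖!![v, x; 0, v]‖ ≥ √(1 + ‖x‖)` for every contraction `x ∈ X`, then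
`‖v* x‖ = ‖x‖ = ‖x v*‖` for every `x ∈ X`. -/
theorem star_v_isometric {B : Type*} [CStarAlgebra B]
    (X : Submodule ℂ B) (v : B) (hv : v ∈ X) (hv1 : ‖v‖ ≤ 1)
    (h : ∀ x ∈ X, ‖x‖ ≤ 1 → Real.sqrt (1 + ‖x‖) ≤ cstarMatrixNorm !![v, x; 0, v]) :
    ∀ x ∈ X, ‖star v * x‖ = ‖x‖ ∧ ‖x * star v‖ = ‖x‖ := by
  letI := CStarAlgebra.spectralOrder B
  haveI := CStarAlgebra.spectralOrderedRing B
  intro x hx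
  have hub1 : ‖star v * x‖ ≤ ‖x‖ := by
    calc ‖star v * x‖ ≤ ‖star v‖ * ‖x‖ := norm_mul_le _ _
      _ = ‖v‖ * ‖x‖ := by rw [norm_star]
      _ ≤ 1 * ‖x‖ := mul_le_mul_of_nonneg_right hv1 (norm_nonneg x)
      _ = ‖x‖ := one_mul _
  have hub2 : ‖x * star v‖ ≤ ‖x‖ := by
    calc ‖x * star v‖ ≤ ‖x‖ * ‖star v‖ := norm_mul_le _ _
      _ = ‖x‖ * ‖v‖ := by rw [norm_star]
      _ ≤ ‖x‖ * 1 := mul_le_mul_of_nonneg_left hv1 (norm_nonneg x)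
      _ = ‖x‖ := mul_one _
  rcases eq_or_ne x 0 with rfl | hx0
  · simp
  have hxn : 0 < ‖x‖ := norm_pos_iff.mpr hx0
  -- the two crucial inequalities, for every `0 < t ≤ 1`
  have main : ∀ t : ℝ, 0 < t → t ≤ 1 →
      1 + t ≤ 1 + t ^ 2 + (t / ‖x‖) * ‖star v * x‖ ∧
      1 + t ≤ 1 + t ^ 2 + (t / ‖x‖) * ‖x * star v‖ := by
    intro t ht0 ht1
    set y : B := (t / ‖x‖) • x with hy
    have hyX : y ∈ X := by
      have h1 : y = ((t / ‖x‖ : ℝ) : ℂ) • x := by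
        rw [hy, Complex.coe_smul]
      rw [h1]
      exact X.smul_mem _ hx
    have hyn : ‖y‖ = t := by
      rw [hy, norm_smul, Real.norm_eq_abs, abs_of_nonneg (by positivity)]
      field_simp
    have hy1 : ‖y‖ ≤ 1 := by rw [hyn]; exact ht1
    have happ := h y hyX hy1
    have hcc : cstarMatrixNorm !![v, y; 0, v] = cnorm !![v, y; 0, v] := rfl
    rw [hcc, hyn] at happ
    have hsvy : ‖star v * y‖ = (t / ‖x‖) * ‖star v * x‖ := by
      rw [hy, mul_smul_comm, norm_smul, Real.norm_eq_abs, abs_of_nonneg (by positivity)]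
    have hysv : ‖y * star v‖ = (t / ‖x‖) * ‖x * star v‖ := by
      rw [hy, smul_mul_assoc, norm_smul, Real.norm_eq_abs, abs_of_nonneg (by positivity)]
    constructor
    · -- upper triangular estimate
      have hupper : cnorm !![v, y; 0, v] ≤ Real.sqrt (1 + ‖y‖ ^ 2 + ‖star v * y‖) :=
        cnorm_le_of_bound _ (by positivity) fun w hw => est_upper hv1 y w hw
      have hchain := happ.trans hupper
      have hsq : 1 + t ≤ 1 + ‖y‖ ^ 2 + ‖star v * y‖ := by
        nlinarith [Real.sq_sqrt (show (0:ℝ) ≤ 1 + t by linarith),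
          Real.sq_sqrt (show (0:ℝ) ≤ 1 + ‖y‖ ^ 2 + ‖star v * y‖ by positivity),
          Real.sqrt_nonneg (1 + t), Real.sqrt_nonneg (1 + ‖y‖ ^ 2 + ‖star v * y‖)]
      rwa [hyn, hsvy] at hsq
    · -- lower triangular (conjugate transpose) estimate
      have hT : (!![v, y; 0, v])ᴴ = !![star v, 0; star y, star v] := by
        ext i j
        fin_cases i <;> fin_cases j <;> simp [Matrix.conjTranspose_apply]
      have hct := cnorm_le_conjTranspose !![v, y; 0, v]
      rw [hT] at hct
      have hlower : cnorm !![star v, 0; star y, star v]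
          ≤ Real.sqrt (1 + ‖star y‖ ^ 2 + ‖star (star y) * star v‖) :=
        cnorm_le_of_bound _ (by positivity) fun w hw =>
          est_lower (by rw [norm_star]; exact hv1) (star y) w hw
      rw [star_star, norm_star] at hlower
      have hchain := happ.trans (hct.trans hlower)
      have hsq : 1 + t ≤ 1 + ‖y‖ ^ 2 + ‖y * star v‖ := by
        nlinarith [Real.sq_sqrt (show (0:ℝ) ≤ 1 + t by linarith),
          Real.sq_sqrt (show (0:ℝ) ≤ 1 + ‖y‖ ^ 2 + ‖y * star v‖ by positivity),
          Real.sqrt_nonneg (1 + t), Real.sqrt_nonneg (1 + ‖y‖ ^ 2 + ‖y * star v‖)]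
      rwa [hyn, hysv] at hsq
  -- from the family of inequalities, deduce the lower bound on the norm
  have hlb : ∀ N : ℝ, 0 ≤ N →
      (∀ t : ℝ, 0 < t → t ≤ 1 → 1 + t ≤ 1 + t ^ 2 + (t / ‖x‖) * N) → ‖x‖ ≤ N := by
    intro N hN hall
    by_contra hlt
    push_neg at hlt
    set t : ℝ := (‖x‖ - N) / (2 * ‖x‖) with htdef
    have ht0 : 0 < t := by
      apply div_pos (by linarith) (by linarith)
    have ht1 : t ≤ 1 := by
      rw [htdef, div_le_one (by linarith)]
      linarith
    have h2 := hall t ht0 ht1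
    have h3 : t ≤ t ^ 2 + (t / ‖x‖) * N := by linarith
    have h4 : t * 1 ≤ t * (t + N / ‖x‖) := by
      calc t * 1 = t := mul_one t
        _ ≤ t ^ 2 + (t / ‖x‖) * N := h3
        _ = t * (t + N / ‖x‖) := by ring
    have h5 : 1 ≤ t + N / ‖x‖ := le_of_mul_le_mul_left h4 ht0
    have h6 : ‖x‖ ≤ t * ‖x‖ + N := by
      have := mul_le_mul_of_nonneg_right h5 hxn.le
      rw [one_mul, add_mul, div_mul_cancel₀ _ hxn.ne'] at this
      exact this
    have h7 : t * ‖x‖ = (‖x‖ - N) / 2 := by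
      rw [htdef]
      field_simp
    rw [h7] at h6
    linarith
  exact ⟨le_antisymm hub1 (hlb _ (norm_nonneg _) fun t a b => (main t a b).1),
    le_antisymm hub2 (hlb _ (norm_nonneg _) fun t a b => (main t a b).2)⟩
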